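/- Let G ≠ directed cycle be a strongly connected digraph with vertices v₁,…,vₙ, and let P = v₁v₂⋯v_k (k ≥ 3) be a directed path in G such that the outdegree of v_i equals 1 for each i = 2,…,k−1. If X = (x₁,…,xₙ)ᵀ is the Perron vector of Q(G), then x₂ < x₃ < ⋯ < x_{k−1} < x_k. -/

import Mathlib

open Matrix

/-- Adjacency matrix of a digraph given by the arc relation `E`. -/
def adjMatrix {V : Type} [Fintype V] (E : V → V → Prop) [DecidableRel E] : Matrix V V ℝ :=
  fun i j => if E i j then 1 else 0

/-- Outdegree of a vertex in the digraph `E`. -/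
def outdeg {V : Type} [Fintype V] (E : V → V → Prop) [DecidableRel E] (i : V) : ℕ :=
  (Finset.univ.filter (fun j => E i j)).card

/-- Signless Laplacian `Q = D⁺ + A` of the digraph `E`. -/
def signlessLaplacian {V : Type} [Fintype V] [DecidableEq V] (E : V → V → Prop)
    [DecidableRel E] : Matrix V V ℝ :=
  Matrix.diagonal (fun i => (outdeg E i : ℝ)) + adjMatrix E

/-- Q-index: the spectral radius of the signless Laplacian of the digraph `E`. -/
noncomputable def qIndex {V : Type} [Fintype V] [DecidableEq V] (E : V → V → Prop)
    [DecidableRel E] : ℝ :=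
  sSup ((fun z => ‖z‖) '' spectrum ℂ ((signlessLaplacian E).map Complex.ofReal))

/-- A digraph is strongly connected if every vertex reaches every vertex by a directed path. -/
def StronglyConnected {V : Type} (E : V → V → Prop) : Prop :=
  ∀ i j : V, Relation.ReflTransGen E i j

lemma mulVec_signless {V : Type} [Fintype V] [DecidableEq V] (G : V → V → Prop)
    [DecidableRel G] (X : V → ℝ) (i : V) :
    (signlessLaplacian G *ᵥ X) i
      = (outdeg G i : ℝ) * X i + ∑ j ∈ Finset.univ.filter (fun j => G i j), X j := by
  simp only [signlessLaplacian, adjMatrix, mulVec, dotProduct, Matrix.add_apply,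
    Matrix.diagonal_apply, add_mul, ite_mul, one_mul, zero_mul, Finset.sum_add_distrib,
    Finset.sum_ite_eq, Finset.mem_univ, if_true, Finset.sum_ite_mem,
    Finset.univ_inter]
  rw [Finset.sum_ite, Finset.sum_const_zero, add_zero]

theorem stmt7 {V : Type} [Fintype V] [DecidableEq V]
    (G : V → V → Prop) [DecidableRel G]
    (hsc : StronglyConnected G) (hnotcycle : ∃ u, outdeg G u ≠ 1)
    (k : ℕ) (hk : 3 ≤ k) (v : Fin k → V) (hinj : Function.Injective v)
    (hpath : ∀ (i : ℕ) (h : i + 1 < k), G (v ⟨i, by omega⟩) (v ⟨i + 1, h⟩))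
    (hdeg : ∀ (i : ℕ) (_ : 1 ≤ i) (h : i + 1 < k), outdeg G (v ⟨i, by omega⟩) = 1)
    (X : V → ℝ) (hpos : ∀ i, 0 < X i)
    (heig : signlessLaplacian G *ᵥ X = qIndex G • X) :
    ∀ (i : ℕ) (_ : 1 ≤ i) (h : i + 1 < k), X (v ⟨i, by omega⟩) < X (v ⟨i + 1, h⟩) := by
  set q := qIndex G
  -- Step 1: q > 2
  obtain ⟨u, hu⟩ := hnotcycle
  -- u has an out-neighbor since there is another vertex
  have hne : ∃ w : V, w ≠ u := by
    rcases (em ((v ⟨0, by omega⟩) = u)) with h0 | h0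
    · exact ⟨v ⟨1, by omega⟩, by
        intro h; rw [← h0] at h
        have := hinj h; simp [Fin.ext_iff] at this⟩
    · exact ⟨v ⟨0, by omega⟩, h0⟩
  obtain ⟨w, hw⟩ := hne
  have hout : ∃ c, G u c := by
    rcases (hsc u w).cases_head with h | ⟨c, hc, _⟩
    · exact absurd h.symm hw
    · exact ⟨c, hc⟩
  have hdu : 2 ≤ outdeg G u := by
    obtain ⟨c, hc⟩ := hout
    have h1 : 1 ≤ outdeg G u := Finset.card_pos.mpr ⟨c, by simp [hc]⟩
    omega
  have hq : 2 < q := by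
    have hequ := congrFun heig u
    rw [mulVec_signless] at hequ
    have hsum : 0 < ∑ j ∈ Finset.univ.filter (fun j => G u j), X j := by
      obtain ⟨c, hc⟩ := hout
      exact Finset.sum_pos (fun j _ => hpos j) ⟨c, by simp [hc]⟩
    have h2 : 2 * X u < q * X u := by
      have : (2 : ℝ) * X u ≤ (outdeg G u : ℝ) * X u := by
        apply mul_le_mul_of_nonneg_right _ (hpos u).le
        exact_mod_cast hdu
      calc 2 * X u ≤ (outdeg G u : ℝ) * X u := this
        _ < (outdeg G u : ℝ) * X u + ∑ j ∈ Finset.univ.filter (fun j => G u j), X j := by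
            linarith
        _ = q * X u := by rw [hequ]; simp [mul_comm]
    exact lt_of_mul_lt_mul_right h2 (hpos u).le |>.trans_le le_rfl
  -- Step 2: the local equation at interior vertices
  intro i hi h
  have heq := congrFun heig (v ⟨i, by omega⟩)
  rw [mulVec_signless] at heq
  have hd1 := hdeg i hi h
  have hfilter : Finset.univ.filter (fun j => G (v ⟨i, by omega⟩) j)
      = {v ⟨i + 1, h⟩} := by
    apply Finset.eq_singleton_iff_unique_mem.mpr
    constructor
    · simp [hpath i h]
    · intro y hy
      have hcard : (Finset.univ.filter (fun j => G (v ⟨i, by omega⟩) j)).card = 1 := hd1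
      obtain ⟨z, hz⟩ := Finset.card_eq_one.mp hcard
      rw [hz] at hy
      have hmem : v ⟨i + 1, h⟩ ∈ ({z} : Finset V) := by
        rw [← hz]; simp [hpath i h]
      simp at hy hmem
      rw [hy, hmem]
  rw [hfilter, Finset.sum_singleton, hd1] at heq
  have : X (v ⟨i + 1, h⟩) = (q - 1) * X (v ⟨i, by omega⟩) := by
    push_cast at heq
    simp at heq
    linarith
  rw [this]
  nlinarith [hpos (v ⟨i, by omega⟩)]
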